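/- arXiv:1708.08526 — 3 statements merged into one kernel-verified Lean document; each statement's English description precedes it below -/
import Mathlib

section
/- Closed form for sums of squared harmonic tails (Lemma 3): Fix a positive integer n and define γ_{n,i} := ∑_{j=i}^n 1/j for 1 ≤ i ≤ n, and a_k := ∑_{i=1}^k γ_{n,i}². Then for all 1 ≤ k ≤ n−1, a_k = k − ∑_{j=1}^k 1/j + k·(1 + ∑_{j=k+1}^n 1/j)², and for k = n, a_n = 2n − ∑_{j=1}^n 1/j. -/
private lemma icc_split_bot (i n : ℕ) (h : i ≤ n) (f : ℕ → ℝ) :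
    ∑ j ∈ Finset.Icc i n, f j = f i + ∑ j ∈ Finset.Icc (i + 1) n, f j := by
  rw [Finset.Icc_add_one_left_eq_Ioc, ← Finset.Ioc_insert_left h, Finset.sum_insert (by simp)]

private lemma aux (n : ℕ) : ∀ k : ℕ, 1 ≤ k → k ≤ n →
    ∑ i ∈ Finset.Icc 1 k, (∑ j ∈ Finset.Icc i n, (1 : ℝ) / j) ^ 2 =
      2 * (k : ℝ) - (∑ j ∈ Finset.Icc 1 k, (1 : ℝ) / j)
        + (k : ℝ) * (∑ j ∈ Finset.Icc (k + 1) n, (1 : ℝ) / j) ^ 2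
        + 2 * (k : ℝ) * (∑ j ∈ Finset.Icc (k + 1) n, (1 : ℝ) / j) := by
  intro k hk
  induction k, hk using Nat.le_induction with
  | base =>
    intro h1n
    rw [Finset.Icc_self, Finset.sum_singleton, Finset.sum_singleton, icc_split_bot 1 n h1n]
    push_cast
    ring
  | succ k hk ih =>
    intro hkn
    have hk' : k ≤ n := by omega
    have hsplit1 : ∑ i ∈ Finset.Icc 1 (k + 1), (∑ j ∈ Finset.Icc i n, (1 : ℝ) / j) ^ 2 =
        (∑ i ∈ Finset.Icc 1 k, (∑ j ∈ Finset.Icc i n, (1 : ℝ) / j) ^ 2)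
          + (∑ j ∈ Finset.Icc (k + 1) n, (1 : ℝ) / j) ^ 2 := by
      rw [Finset.sum_Icc_succ_top (by omega)]
    have hsplit2 : ∑ j ∈ Finset.Icc 1 (k + 1), (1 : ℝ) / j =
        (∑ j ∈ Finset.Icc 1 k, (1 : ℝ) / j) + 1 / (k + 1 : ℕ) := by
      rw [Finset.sum_Icc_succ_top (by omega)]
    have hsplit3 : ∑ j ∈ Finset.Icc (k + 1) n, (1 : ℝ) / j =
        1 / (k + 1 : ℕ) + ∑ j ∈ Finset.Icc (k + 2) n, (1 : ℝ) / j := by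
      exact icc_split_bot (k + 1) n hkn _
    rw [hsplit1, hsplit2, ih hk', hsplit3]
    have hc : ((k : ℝ) + 1) ≠ 0 := by positivity
    push_cast
    field_simp
    ring

/-- **Closed form for sums of squared harmonic tails (Lemma 3).**
With `γ_{n,i} = ∑_{j=i}^n 1/j` and `a_k = ∑_{i=1}^k γ_{n,i}²`:
for `1 ≤ k ≤ n-1`, `a_k = k - ∑_{j=1}^k 1/j + k (1 + ∑_{j=k+1}^n 1/j)²`,
and `a_n = 2n - ∑_{j=1}^n 1/j`. -/
theorem stmt_7 (n : ℕ) (hn : 1 ≤ n) :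
    (∀ k : ℕ, 1 ≤ k → k ≤ n - 1 →
      ∑ i ∈ Finset.Icc 1 k, (∑ j ∈ Finset.Icc i n, (1 : ℝ) / j) ^ 2 =
        (k : ℝ) - (∑ j ∈ Finset.Icc 1 k, (1 : ℝ) / j)
          + (k : ℝ) * (1 + ∑ j ∈ Finset.Icc (k + 1) n, (1 : ℝ) / j) ^ 2) ∧
    ∑ i ∈ Finset.Icc 1 n, (∑ j ∈ Finset.Icc i n, (1 : ℝ) / j) ^ 2 =
      2 * (n : ℝ) - ∑ j ∈ Finset.Icc 1 n, (1 : ℝ) / j := by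
  constructor
  · intro k hk hkn
    rw [aux n k hk (by omega)]
    ring
  · have h := aux n n hn le_rfl
    have he : Finset.Icc (n + 1) n = ∅ := Finset.Icc_eq_empty (by omega)
    rw [he, Finset.sum_empty] at h
    rw [h]
    ring
end

section
/- Limiting weight in the moving average variance: Fix η ∈ [0,1) and set n_η := ⌊ηn⌋ and γ_{n,i} := ∑_{j=i}^n 1/j. Then lim_{n→∞} (1/(n − n_η)) · [ n_η · (∑_{j=n_η+1}^n 1/j)² + ∑_{i=n_η+1}^n γ_{n,i}² ] = (1−η)·w_η, where w_η := 2/(1−η) + 2η·ln(η)/(1−η)² (with w_0 := 2). In particular, for η = 0 this reads lim_{n→∞} (1/n)∑_{i=1}^n γ_{n,i}² = 2. -/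
open Filter Finset Topology

lemma aux_one_div_le (n : ℕ) (hn : 1 ≤ n) :
    (1:ℝ)/(n+1) ≤ Real.log (n+1) - Real.log n := by
  have hn0 : (0:ℝ) < n := by exact_mod_cast hn
  have h1 : (0:ℝ) < (n:ℝ)/((n:ℝ)+1) := by positivity
  have h2 := Real.log_le_sub_one_of_pos h1
  rw [Real.log_div (by positivity) (by positivity)] at h2
  have he : (n:ℝ)/((n:ℝ)+1) - 1 = -(1/((n:ℝ)+1)) := by field_simp; ring
  rw [he] at h2; linarith

lemma aux_le_one_div (n : ℕ) :
    Real.log (n+2) - Real.log (n+1) ≤ (1:ℝ)/(n+1) := by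
  have h1 : (0:ℝ) < ((n:ℝ)+2)/((n:ℝ)+1) := by positivity
  have h2 := Real.log_le_sub_one_of_pos h1
  rw [Real.log_div (by positivity) (by positivity)] at h2
  have he : ((n:ℝ)+2)/((n:ℝ)+1) - 1 = 1/((n:ℝ)+1) := by field_simp; ring
  rw [he] at h2; linarith

lemma sum_le_log (m : ℕ) (hm : 1 ≤ m) : ∀ n, m ≤ n →
    ∑ j ∈ Icc (m+1) n, (1:ℝ)/j ≤ Real.log n - Real.log m := by
  refine Nat.le_induction ?_ ?_
  · simp [Finset.Icc_eq_empty_of_lt (Nat.lt_succ_self m)]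
  · intro n hn ih
    rw [Finset.sum_Icc_succ_top (by omega)]
    have h := aux_one_div_le n (le_trans hm hn)
    push_cast
    push_cast at ih h
    linarith

lemma log_le_sum (m : ℕ) : ∀ n, m ≤ n →
    Real.log (n+1) - Real.log (m+1) ≤ ∑ j ∈ Icc (m+1) n, (1:ℝ)/j := by
  refine Nat.le_induction ?_ ?_
  · simp [Finset.Icc_eq_empty_of_lt (Nat.lt_succ_self m)]
  · intro n hn ih
    rw [Finset.sum_Icc_succ_top (by omega)]
    have h := aux_le_one_div n
    push_cast
    push_cast at ih h
    have he : Real.log ((n:ℝ)+1+1) = Real.log ((n:ℝ)+2) := by ring_nf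
    rw [he]
    linarith

lemma sum_gamma (m : ℕ) : ∀ n, m ≤ n →
    ∑ i ∈ Icc (m+1) n, (∑ j ∈ Icc i n, (1:ℝ)/j)
      = ((n:ℝ) - m) - m * ∑ j ∈ Icc (m+1) n, (1:ℝ)/j := by
  refine Nat.le_induction ?_ ?_
  · simp [Finset.Icc_eq_empty_of_lt (Nat.lt_succ_self m)]
  · intro n hn ih
    have hcard : (Finset.Icc (m+1) n).card = n - m := by
      rw [Nat.card_Icc]; omega
    have hnm : ((n - m : ℕ) : ℝ) = (n:ℝ) - m := by
      push_cast [Nat.cast_sub hn]; ring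
    have hT' : ∑ j ∈ Icc (m+1) (n+1), (1:ℝ)/j
        = (∑ j ∈ Icc (m+1) n, (1:ℝ)/j) + 1/((n:ℝ)+1) := by
      rw [Finset.sum_Icc_succ_top (by omega)]; push_cast; ring
    have hinner : ∀ i ∈ Finset.Icc (m+1) n,
        (∑ j ∈ Icc i (n+1), (1:ℝ)/j)
          = (∑ j ∈ Icc i n, (1:ℝ)/j) + 1/((n:ℝ)+1) := by
      intro i hi
      rw [Finset.mem_Icc] at hi
      rw [Finset.sum_Icc_succ_top (by omega)]
      push_cast; ring
    have houter : ∑ i ∈ Icc (m+1) (n+1), (∑ j ∈ Icc i (n+1), (1:ℝ)/j)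
        = (∑ i ∈ Icc (m+1) n, (∑ j ∈ Icc i (n+1), (1:ℝ)/j))
          + ∑ j ∈ Icc (n+1) (n+1), (1:ℝ)/j := by
      rw [Finset.sum_Icc_succ_top (by omega : m+1 ≤ n+1)]
    rw [houter, Finset.sum_congr rfl hinner, Finset.sum_add_distrib,
        Finset.sum_const, hcard, ih, hT', Finset.Icc_self, Finset.sum_singleton,
        nsmul_eq_mul, hnm]
    have hpos : ((n:ℝ)+1) ≠ 0 := by positivity
    push_cast
    field_simp
    ring

lemma key_id (m : ℕ) : ∀ n, m ≤ n →
    (m:ℝ) * (∑ j ∈ Icc (m+1) n, (1:ℝ)/j)^2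
      + ∑ i ∈ Icc (m+1) n, (∑ j ∈ Icc i n, (1:ℝ)/j)^2
    = 2*((n:ℝ) - m) - (1 + 2*m) * ∑ j ∈ Icc (m+1) n, (1:ℝ)/j := by
  refine Nat.le_induction ?_ ?_
  · simp [Finset.Icc_eq_empty_of_lt (Nat.lt_succ_self m)]
  · intro n hn ih
    have hcard : (Finset.Icc (m+1) n).card = n - m := by
      rw [Nat.card_Icc]; omega
    have hnm : ((n - m : ℕ) : ℝ) = (n:ℝ) - m := by
      push_cast [Nat.cast_sub hn]; ring
    have hT' : ∑ j ∈ Icc (m+1) (n+1), (1:ℝ)/j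
        = (∑ j ∈ Icc (m+1) n, (1:ℝ)/j) + 1/((n:ℝ)+1) := by
      rw [Finset.sum_Icc_succ_top (by omega)]; push_cast; ring
    have hinner : ∀ i ∈ Finset.Icc (m+1) n,
        (∑ j ∈ Icc i (n+1), (1:ℝ)/j)^2
          = (∑ j ∈ Icc i n, (1:ℝ)/j)^2
            + (2*(∑ j ∈ Icc i n, (1:ℝ)/j))*(1/((n:ℝ)+1)) + (1/((n:ℝ)+1))^2 := by
      intro i hi
      rw [Finset.mem_Icc] at hi
      rw [Finset.sum_Icc_succ_top (by omega)]
      push_cast; ring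
    have houter : ∑ i ∈ Icc (m+1) (n+1), (∑ j ∈ Icc i (n+1), (1:ℝ)/j)^2
        = (∑ i ∈ Icc (m+1) n, (∑ j ∈ Icc i (n+1), (1:ℝ)/j)^2)
          + (∑ j ∈ Icc (n+1) (n+1), (1:ℝ)/j)^2 := by
      rw [Finset.sum_Icc_succ_top (by omega : m+1 ≤ n+1)]
    rw [houter, Finset.sum_congr rfl hinner, Finset.sum_add_distrib,
        Finset.sum_add_distrib, Finset.sum_const, hcard, hT',
        Finset.Icc_self, Finset.sum_singleton, nsmul_eq_mul, hnm,
        ← Finset.sum_mul, ← Finset.mul_sum, sum_gamma m n hn]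
    have hmn : (m:ℝ) ≤ (n:ℝ) := by exact_mod_cast hn
    set T := ∑ j ∈ Icc (m+1) n, (1:ℝ)/j with hT
    set S := ∑ i ∈ Icc (m+1) n, (∑ j ∈ Icc i n, (1:ℝ)/j)^2 with hS
    have hpos : ((n:ℝ)+1) ≠ 0 := by positivity
    push_cast
    have ih2 : S = 2*((n:ℝ) - m) - (1 + 2*m) * T - (m:ℝ)*T^2 := by linarith [ih]
    rw [ih2]
    field_simp
    ring

/-- **Limiting weight in the moving average variance.**
For `η ∈ [0,1)`, with `n_η = ⌊ηn⌋` and `γ_{n,i} = ∑_{j=i}^n 1/j`,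
`(1/(n-n_η)) [ n_η (∑_{j=n_η+1}^n 1/j)² + ∑_{i=n_η+1}^n γ_{n,i}² ] → (1-η) w_η`,
where `w_η = 2/(1-η) + 2η ln η/(1-η)²` (this formula evaluates to `w_0 = 2` at `η = 0`,
since `Real.log 0 = 0`).  In particular, for `η = 0`, `(1/n) ∑_{i=1}^n γ_{n,i}² → 2`. -/
theorem stmt_8 (η : ℝ) (hη0 : 0 ≤ η) (hη1 : η < 1)
    (w : ℝ) (hw : w = 2 / (1 - η) + 2 * η * Real.log η / (1 - η) ^ 2) :
    Tendsto (fun n : ℕ =>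
        (1 / ((n : ℝ) - (⌊η * (n : ℝ)⌋₊ : ℝ))) *
          ((⌊η * (n : ℝ)⌋₊ : ℝ) * (∑ j ∈ Finset.Icc (⌊η * (n : ℝ)⌋₊ + 1) n, (1 : ℝ) / j) ^ 2 +
            ∑ i ∈ Finset.Icc (⌊η * (n : ℝ)⌋₊ + 1) n, (∑ j ∈ Finset.Icc i n, (1 : ℝ) / j) ^ 2))
      atTop (nhds ((1 - η) * w)) ∧
    (η = 0 → Tendsto (fun n : ℕ =>
        (1 / (n : ℝ)) * ∑ i ∈ Finset.Icc 1 n, (∑ j ∈ Finset.Icc i n, (1 : ℝ) / j) ^ 2)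
      atTop (nhds 2)) := by
  have h1η : (0:ℝ) < 1 - η := by linarith
  set mf : ℕ → ℕ := fun n => ⌊η * (n:ℝ)⌋₊ with hmf
  set T : ℕ → ℝ := fun n => ∑ j ∈ Finset.Icc (mf n + 1) n, (1:ℝ)/j with hTdef
  have hmle : ∀ n : ℕ, (mf n : ℝ) ≤ η * n := fun n => Nat.floor_le (by positivity)
  have hmlt : ∀ n : ℕ, 1 ≤ n → mf n < n := by
    intro n hn
    have hn1 : (1:ℝ) ≤ n := by exact_mod_cast hn
    have h1 : (mf n : ℝ) < n := lt_of_le_of_lt (hmle n) (by nlinarith)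
    exact_mod_cast h1
  have key : Tendsto (fun n : ℕ =>
      ((1:ℝ) + 2*(mf n)) / ((n:ℝ) - mf n) * T n) atTop
      (𝓝 (2*η/(1-η) * (-Real.log η))) := by
    rcases eq_or_lt_of_le hη0 with h0 | hηpos
    · -- η = 0
      have hm0 : ∀ n : ℕ, mf n = 0 := by intro n; simp [hmf, ← h0]
      have hlim0 : (2*η/(1-η) * (-Real.log η)) = 0 := by rw [← h0]; simp
      rw [hlim0]
      have hupper : Tendsto (fun n : ℕ => 1/(n:ℝ) + Real.log n / n)
          atTop (𝓝 0) := by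
        have hlog : Tendsto (fun n : ℕ => Real.log n / n) atTop (𝓝 0) :=
          (Real.isLittleO_log_id_atTop.tendsto_div_nhds_zero).comp
            tendsto_natCast_atTop_atTop
        simpa using tendsto_one_div_atTop_nhds_zero_nat.add hlog
      apply tendsto_of_tendsto_of_tendsto_of_le_of_le' tendsto_const_nhds hupper
      · filter_upwards [eventually_ge_atTop 1] with n hn
        have hn0 : (0:ℝ) < n := by exact_mod_cast hn
        have hT0 : 0 ≤ T n := by
          apply Finset.sum_nonneg; intro j hj; positivity
        rw [hm0 n]
        have e1 : ((1:ℝ) + 2*((0:ℕ):ℝ))/((n:ℝ) - ((0:ℕ):ℝ)) * T n = T n / n := by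
          push_cast; ring
        rw [e1]
        exact div_nonneg hT0 hn0.le
      · filter_upwards [eventually_ge_atTop 1] with n hn
        have hn0 : (0:ℝ) < n := by exact_mod_cast hn
        have hTle : T n ≤ 1 + Real.log n := by
          have hsplit : Finset.Icc 1 n = insert 1 (Finset.Icc 2 n) := by
            ext x; simp only [Finset.mem_Icc, Finset.mem_insert]; omega
          have h1n : (1:ℕ) ∉ Finset.Icc 2 n := by simp
          have hTeq : T n = 1 + ∑ j ∈ Finset.Icc 2 n, (1:ℝ)/j := by
            rw [hTdef]
            simp only [hm0 n, zero_add, hsplit, Finset.sum_insert h1n]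
            norm_num
          have hb := sum_le_log 1 le_rfl n hn
          simp only [Nat.cast_one, Real.log_one, sub_zero] at hb
          rw [hTeq]; linarith
        rw [hm0 n]
        have e1 : ((1:ℝ) + 2*((0:ℕ):ℝ))/((n:ℝ) - ((0:ℕ):ℝ)) * T n = T n / n := by
          push_cast; ring
        rw [e1]
        have h3 : T n / (n:ℝ) ≤ (1 + Real.log n)/(n:ℝ) := by gcongr
        have h4 : (1 + Real.log n)/(n:ℝ) = 1/(n:ℝ) + Real.log n/(n:ℝ) := by ring
        linarith
    · -- η > 0
      have hratio : Tendsto (fun n : ℕ => (mf n : ℝ)/n) atTop (𝓝 η) := by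
        have hlow : Tendsto (fun n : ℕ => η - 1/(n:ℝ)) atTop (𝓝 η) := by
          simpa using tendsto_const_nhds.sub (tendsto_one_div_atTop_nhds_zero_nat : Tendsto (fun n : ℕ => 1/(n:ℝ)) atTop (𝓝 0))
        apply tendsto_of_tendsto_of_tendsto_of_le_of_le' hlow tendsto_const_nhds
        · filter_upwards [eventually_ge_atTop 1] with n hn
          have hn0 : (0:ℝ) < n := by exact_mod_cast hn
          have hlt := Nat.lt_floor_add_one (η * (n:ℝ))
          have hinv : (1/(n:ℝ))*n = 1 := by field_simp
          rw [le_div_iff₀ hn0]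
          nlinarith [hlt]
        · filter_upwards [eventually_ge_atTop 1] with n hn
          have hn0 : (0:ℝ) < n := by exact_mod_cast hn
          rw [div_le_iff₀ hn0]
          exact hmle n
      have hmof : Tendsto mf atTop atTop := by
        apply tendsto_nat_floor_atTop.comp
        exact Tendsto.const_mul_atTop hηpos tendsto_natCast_atTop_atTop
      have hm1 : ∀ᶠ n in atTop, 1 ≤ mf n := hmof.eventually_ge_atTop 1
      have hnn1 : Tendsto (fun n : ℕ => (n:ℝ)/((n:ℝ)+1)) atTop (𝓝 1) := by
        have h : Tendsto (fun n : ℕ => 1 - 1/((n:ℝ)+1)) atTop (𝓝 (1 - 0)) :=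
          tendsto_const_nhds.sub tendsto_one_div_add_atTop_nhds_zero_nat
        rw [sub_zero] at h
        refine Tendsto.congr (fun n => ?_) h
        have : ((n:ℝ)+1) ≠ 0 := by positivity
        field_simp; ring
      have hr : Tendsto (fun n : ℕ => ((mf n : ℝ)+1)/((n:ℝ)+1)) atTop (𝓝 η) := by
        have h1 : Tendsto (fun n : ℕ => ((mf n:ℝ)/n + 1/n) * ((n:ℝ)/((n:ℝ)+1)))
            atTop (𝓝 ((η + 0) * 1)) :=
          (hratio.add tendsto_one_div_atTop_nhds_zero_nat).mul hnn1
        rw [show (η + 0) * 1 = η by ring] at h1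
        apply h1.congr'
        filter_upwards [eventually_ge_atTop 1] with n hn
        have hn0 : (0:ℝ) < n := by exact_mod_cast hn
        have h2 : ((n:ℝ)+1) ≠ 0 := by positivity
        field_simp
      have hTub : Tendsto (fun n : ℕ => -Real.log ((mf n : ℝ)/n)) atTop
          (𝓝 (-Real.log η)) := (hratio.log (ne_of_gt hηpos)).neg
      have hTlb : Tendsto (fun n : ℕ => -Real.log (((mf n : ℝ)+1)/((n:ℝ)+1))) atTop
          (𝓝 (-Real.log η)) := (hr.log (ne_of_gt hηpos)).neg
      have hTlim : Tendsto T atTop (𝓝 (-Real.log η)) := by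
        apply tendsto_of_tendsto_of_tendsto_of_le_of_le' hTlb hTub
        · filter_upwards [hm1, eventually_ge_atTop 1] with n h1 hn
          have hn0 : (0:ℝ) < n := by exact_mod_cast hn
          have hm0 : (0:ℝ) < mf n := by exact_mod_cast h1
          have hlb := log_le_sum (mf n) n (le_of_lt (hmlt n hn))
          have heq : -Real.log (((mf n : ℝ)+1)/((n:ℝ)+1))
              = Real.log ((n:ℝ)+1) - Real.log ((mf n:ℝ)+1) := by
            rw [Real.log_div (by positivity) (by positivity)]; ring
          rw [heq]
          exact hlb
        · filter_upwards [hm1, eventually_ge_atTop 1] with n h1 hn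
          have hn0 : (0:ℝ) < n := by exact_mod_cast hn
          have hm0 : (0:ℝ) < mf n := by exact_mod_cast h1
          have hub := sum_le_log (mf n) h1 n (le_of_lt (hmlt n hn))
          have heq : -Real.log ((mf n : ℝ)/(n:ℝ))
              = Real.log (n:ℝ) - Real.log (mf n:ℝ) := by
            rw [Real.log_div (by positivity) (by positivity)]; ring
          rw [heq]
          exact hub
      have hc : Tendsto (fun n : ℕ => ((1:ℝ) + 2*(mf n))/((n:ℝ) - mf n)) atTop
          (𝓝 ((0 + 2*η)/(1-η))) := by
        have hnum : Tendsto (fun n : ℕ => 1/(n:ℝ) + 2*((mf n:ℝ)/n)) atTop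
            (𝓝 (0 + 2*η)) :=
          tendsto_one_div_atTop_nhds_zero_nat.add (hratio.const_mul 2)
        have hden : Tendsto (fun n : ℕ => 1 - (mf n:ℝ)/n) atTop (𝓝 (1-η)) :=
          tendsto_const_nhds.sub hratio
        apply (hnum.div hden (by linarith)).congr'
        filter_upwards [eventually_ge_atTop 1] with n hn
        have hn0 : (0:ℝ) < n := by exact_mod_cast hn
        have hltR : (mf n : ℝ) < n := by exact_mod_cast hmlt n hn
        have hsub : (n:ℝ) - mf n ≠ 0 := by linarith
        simp only [Pi.div_apply]
        field_simp
      have := hc.mul hTlim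
      rw [show (0 + 2*η)/(1-η) * (-Real.log η) = 2*η/(1-η) * (-Real.log η) by ring] at this
      exact this
  have main : Tendsto (fun n : ℕ =>
      (1 / ((n : ℝ) - (mf n : ℝ))) *
        ((mf n : ℝ) * (∑ j ∈ Finset.Icc (mf n + 1) n, (1 : ℝ) / j) ^ 2 +
          ∑ i ∈ Finset.Icc (mf n + 1) n, (∑ j ∈ Finset.Icc i n, (1 : ℝ) / j) ^ 2))
      atTop (𝓝 ((1 - η) * w)) := by
    have h2 : Tendsto (fun n : ℕ => 2 - ((1:ℝ) + 2*(mf n))/((n:ℝ) - mf n) * T n)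
        atTop (𝓝 (2 - 2*η/(1-η) * (-Real.log η))) := tendsto_const_nhds.sub key
    have hval : (1-η)*w = 2 - 2*η/(1-η)*(-Real.log η) := by
      rw [hw]; field_simp; ring
    rw [hval]
    apply h2.congr'
    filter_upwards [eventually_ge_atTop 1] with n hn
    have hlt := hmlt n hn
    have hltR : (mf n : ℝ) < n := by exact_mod_cast hlt
    have hne : (n:ℝ) - mf n ≠ 0 := by linarith
    rw [key_id (mf n) n (le_of_lt hlt)]
    show 2 - ((1:ℝ) + 2*(mf n))/((n:ℝ) - mf n) * T n
      = (1 / ((n : ℝ) - (mf n : ℝ))) * (2*((n:ℝ) - mf n) - (1 + 2*(mf n)) * T n)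
    field_simp
  constructor
  · exact main
  · intro h0
    subst h0
    have hm0 : ∀ n : ℕ, mf n = 0 := by intro n; simp [hmf]
    have hw2 : (1 - (0:ℝ)) * w = 2 := by rw [hw]; norm_num
    rw [← hw2]
    apply main.congr
    intro n
    rw [hm0 n]
    norm_num
end

section
/- Closed-form data-collection quantities from the KKT conditions (equation (23)): Let Q ≥ 1 and K ≥ 2 be integers, b ∈ {1,…,K}, and let c_S > 0, λ > 0, and for each q, c_{D,q} > 0 and N_q > 0, and for each i ≠ b, δ_{bi} > 0, σ_i > 0, Ψ_{bi} > 0, M_i > 0, ψ_{bi}(q) ≥ 0. Suppose that the stationarity conditions hold: for every q, c_{D,q}·λ = ∑_{i≠b} (1/(2√(2π)))·exp(−δ_{bi}²/(2Ψ_{bi}²))·δ_{bi}·ψ_{bi}²(q)/(Ψ_{bi}³·N_q²), and for every i ≠ b, c_S·λ = (1/(2√(2π)))·exp(−δ_{bi}²/(2Ψ_{bi}²))·δ_{bi}·σ_i²/(Ψ_{bi}³·M_i²). Then for every q, N_q = √( (c_S/c_{D,q}) · ∑_{i≠b} M_i²·ψ_{bi}²(q)/σ_i² ). -/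
/-- **Closed-form data-collection quantities from the KKT conditions (equation (23)).**
If the stationarity conditions of the OCBAIU Lagrangian hold, then for every input
distribution `q`, `N_q = √((c_S/c_{D,q}) ∑_{i≠b} M_i² ψ_{bi}²(q)/σ_i²)`. -/
theorem stmt_16 (Q K : ℕ) (hQ : 1 ≤ Q) (hK : 2 ≤ K) (b : Fin K)
    (cS lam : ℝ) (hcS : 0 < cS) (hlam : 0 < lam)
    (cD N : Fin Q → ℝ) (hcD : ∀ q, 0 < cD q) (hN : ∀ q, 0 < N q)
    (δ σ Ψ M : Fin K → ℝ) (ψ : Fin K → Fin Q → ℝ)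
    (hδ : ∀ i, i ≠ b → 0 < δ i) (hσ : ∀ i, i ≠ b → 0 < σ i)
    (hΨ : ∀ i, i ≠ b → 0 < Ψ i) (hM : ∀ i, i ≠ b → 0 < M i)
    (hψ : ∀ i q, i ≠ b → 0 ≤ ψ i q)
    (hstat1 : ∀ q, cD q * lam = ∑ i ∈ Finset.univ.erase b,
        (1 / (2 * Real.sqrt (2 * Real.pi))) * Real.exp (-(δ i) ^ 2 / (2 * (Ψ i) ^ 2)) *
          (δ i * (ψ i q) ^ 2 / ((Ψ i) ^ 3 * (N q) ^ 2)))
    (hstat2 : ∀ i, i ≠ b → cS * lam = (1 / (2 * Real.sqrt (2 * Real.pi))) *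
        Real.exp (-(δ i) ^ 2 / (2 * (Ψ i) ^ 2)) * (δ i * (σ i) ^ 2 / ((Ψ i) ^ 3 * (M i) ^ 2))) :
    ∀ q, N q = Real.sqrt ((cS / cD q) *
      ∑ i ∈ Finset.univ.erase b, (M i) ^ 2 * (ψ i q) ^ 2 / (σ i) ^ 2) := by
  intro q
  have hNq := hN q
  have key : cD q * lam * (N q) ^ 2 = cS * lam *
      ∑ i ∈ Finset.univ.erase b, (M i) ^ 2 * (ψ i q) ^ 2 / (σ i) ^ 2 := by
    rw [hstat1 q, Finset.sum_mul, Finset.mul_sum]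
    refine Finset.sum_congr rfl fun i hi => ?_
    have hib := Finset.ne_of_mem_erase hi
    rw [hstat2 i hib]
    have h1 := (hσ i hib).ne'
    have h2 := (hΨ i hib).ne'
    have h3 := (hM i hib).ne'
    field_simp
  have hS : (N q) ^ 2 = (cS / cD q) *
      ∑ i ∈ Finset.univ.erase b, (M i) ^ 2 * (ψ i q) ^ 2 / (σ i) ^ 2 := by
    have hc := (hcD q).ne'
    have hl := hlam.ne'
    have key2 : lam * (cD q * N q ^ 2) = lam * (cS *
        ∑ i ∈ Finset.univ.erase b, (M i) ^ 2 * (ψ i q) ^ 2 / (σ i) ^ 2) := by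
      linarith [key]
    have key3 := mul_left_cancel₀ hl key2
    rw [div_mul_eq_mul_div, eq_div_iff hc]
    linarith [key3]
  rw [← hS, Real.sqrt_sq hNq.le]
end
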